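/- Let (Ω, ℱ, P) be a probability space, let X₁, X₂ : Ω → ℝ^m be random vectors with E‖X₁‖² < ∞ and E‖X₂‖² < ∞, and let w : Ω → ℝ be measurable with 0 ≤ w ≤ K almost surely for some constant K. Define Σ₀ = E[w(½ X₁X₁ᵀ + ⅛ X₂X₂ᵀ)], Ω₀ = E[w²(X₁X₁ᵀ + ¼ X₂X₂ᵀ)] and Σ = E[½ X₁X₁ᵀ + ⅛ X₂X₂ᵀ], and assume Ω₀ and Σ are positive definite and Σ₀ is invertible. Then Σ₀⁻¹ Ω₀ Σ₀⁻¹ − 2Σ⁻¹ is positive semidefinite. -/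

import Mathlib

open MeasureTheory Matrix

theorem sum_bilin' {m : ℕ} (x y A B : Fin m → ℝ) (v c₁ c₂ : ℝ) (g : Fin m → Fin m → ℝ)
    (hg : ∀ i j, g i j = v * (c₁ * A i * A j + c₂ * B i * B j)) :
    ∑ i, ∑ j, x i * g i j * y j
      = v * (c₁ * ((∑ i, x i * A i) * (∑ j, y j * A j))
           + c₂ * ((∑ i, x i * B i) * (∑ j, y j * B j))) := by
  have h1 : ∀ i ∈ Finset.univ, ∑ j, x i * g i j * y j
      = (v*c₁) * ((x i * A i) * (∑ j, y j * A j)) + (v*c₂) * ((x i * B i) * (∑ j, y j * B j)) := by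
    intro i _
    calc ∑ j, x i * g i j * y j
        = ∑ j, ((v*c₁) * ((x i * A i) * (y j * A j)) + (v*c₂) * ((x i * B i) * (y j * B j))) :=
          Finset.sum_congr rfl fun j _ => by rw [hg]; ring
      _ = _ := by
          rw [Finset.sum_add_distrib]
          simp only [← Finset.mul_sum]
  calc ∑ i, ∑ j, x i * g i j * y j
      = ∑ i, (((∑ j, y j * A j) * (v*c₁)) * (x i * A i) + ((∑ j, y j * B j) * (v*c₂)) * (x i * B i)) :=
        Finset.sum_congr rfl fun i hi => by rw [h1 i hi]; ring
    _ = _ := by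
        rw [Finset.sum_add_distrib]
        simp only [← Finset.mul_sum]
        ring

theorem quad_eq' {Ω : Type*} [MeasurableSpace Ω] (P : Measure Ω) {m : ℕ}
    (f : Fin m → Fin m → Ω → ℝ) (hf : ∀ i j, Integrable (f i j) P) (x y : Fin m → ℝ) :
    x ⬝ᵥ ((Matrix.of fun i j => ∫ ω, f i j ω ∂P) *ᵥ y) = ∫ ω, ∑ i, ∑ j, x i * f i j ω * y j ∂P := by
  rw [integral_finset_sum _ (fun i _ => integrable_finset_sum _
    (fun j _ => ((hf i j).const_mul (x i)).mul_const (y j)))]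
  simp only [dotProduct, mulVec, Matrix.of_apply]
  refine Finset.sum_congr rfl fun i _ => ?_
  rw [integral_finset_sum _ (fun j _ => ((hf i j).const_mul (x i)).mul_const (y j))]
  rw [Finset.mul_sum]
  refine Finset.sum_congr rfl fun j _ => ?_
  rw [← mul_assoc, ← integral_const_mul, ← integral_mul_const]

theorem bilin_rep {Ω : Type*} [MeasurableSpace Ω] (P : Measure Ω) {m : ℕ}
    (X₁ X₂ : Ω → Fin m → ℝ) (v : Ω → ℝ) (c₁ c₂ : ℝ)
    (f : Fin m → Fin m → Ω → ℝ)
    (hfe : ∀ i j ω, f i j ω = v ω * (c₁ * X₁ ω i * X₁ ω j + c₂ * X₂ ω i * X₂ ω j))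
    (hf : ∀ i j, Integrable (f i j) P) (x y : Fin m → ℝ) :
    (x ⬝ᵥ ((Matrix.of fun i j => ∫ ω, f i j ω ∂P) *ᵥ y)
        = ∫ ω, v ω * (c₁ * ((∑ i, x i * X₁ ω i) * (∑ i, y i * X₁ ω i))
             + c₂ * ((∑ i, x i * X₂ ω i) * (∑ i, y i * X₂ ω i))) ∂P)
    ∧ Integrable (fun ω => v ω * (c₁ * ((∑ i, x i * X₁ ω i) * (∑ i, y i * X₁ ω i))
             + c₂ * ((∑ i, x i * X₂ ω i) * (∑ i, y i * X₂ ω i)))) P := by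
  have hpt : ∀ ω, ∑ i, ∑ j, x i * f i j ω * y j
      = v ω * (c₁ * ((∑ i, x i * X₁ ω i) * (∑ i, y i * X₁ ω i))
             + c₂ * ((∑ i, x i * X₂ ω i) * (∑ i, y i * X₂ ω i))) := fun ω =>
    sum_bilin' x y (X₁ ω) (X₂ ω) (v ω) c₁ c₂ (fun i j => f i j ω) (fun i j => hfe i j ω)
  constructor
  · rw [quad_eq' P f hf x y]
    exact integral_congr_ae (Filter.Eventually.of_forall hpt)
  · exact (integrable_finset_sum _ (fun i _ => integrable_finset_sum _
      (fun j _ => ((hf i j).const_mul (x i)).mul_const (y j)))).congr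
      (Filter.Eventually.of_forall hpt)

theorem prod_int {Ω : Type*} [MeasurableSpace Ω] (P : Measure Ω) {m : ℕ}
    (X₁ X₂ : Ω → Fin m → ℝ) (hX₁ : Measurable X₁) (hX₂ : Measurable X₂)
    (hX₁2 : Integrable (fun ω => ‖X₁ ω‖ ^ 2) P) (hX₂2 : Integrable (fun ω => ‖X₂ ω‖ ^ 2) P)
    (v : Ω → ℝ) (hv : Measurable v) (C : ℝ) (hvC : ∀ᵐ ω ∂P, |v ω| ≤ C)
    (c₁ c₂ : ℝ) (i j : Fin m) :
    Integrable (fun ω => v ω * (c₁ * X₁ ω i * X₁ ω j + c₂ * X₂ ω i * X₂ ω j)) P := by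
  have hmeas : Measurable fun ω => v ω * (c₁ * X₁ ω i * X₁ ω j + c₂ * X₂ ω i * X₂ ω j) :=
    hv.mul (((measurable_const.mul ((measurable_pi_apply i).comp hX₁)).mul
        ((measurable_pi_apply j).comp hX₁)).add
      ((measurable_const.mul ((measurable_pi_apply i).comp hX₂)).mul
        ((measurable_pi_apply j).comp hX₂)))
  have hbound : Integrable (fun ω => (C * (|c₁| + |c₂|)) * (‖X₁ ω‖^2 + ‖X₂ ω‖^2)) P :=
    (hX₁2.add hX₂2).const_mul _
  refine hbound.mono' hmeas.aestronglyMeasurable ?_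
  filter_upwards [hvC] with ω hω
  have hC0 : (0:ℝ) ≤ C := le_trans (abs_nonneg _) hω
  have h1i : |X₁ ω i| ≤ ‖X₁ ω‖ := by simpa using norm_le_pi_norm (X₁ ω) i
  have h1j : |X₁ ω j| ≤ ‖X₁ ω‖ := by simpa using norm_le_pi_norm (X₁ ω) j
  have h2i : |X₂ ω i| ≤ ‖X₂ ω‖ := by simpa using norm_le_pi_norm (X₂ ω) i
  have h2j : |X₂ ω j| ≤ ‖X₂ ω‖ := by simpa using norm_le_pi_norm (X₂ ω) j
  have hab : |X₁ ω i| * |X₁ ω j| ≤ ‖X₁ ω‖^2 := by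
    rw [sq]; exact mul_le_mul h1i h1j (abs_nonneg _) (norm_nonneg _)
  have hcd : |X₂ ω i| * |X₂ ω j| ≤ ‖X₂ ω‖^2 := by
    rw [sq]; exact mul_le_mul h2i h2j (abs_nonneg _) (norm_nonneg _)
  calc ‖v ω * (c₁ * X₁ ω i * X₁ ω j + c₂ * X₂ ω i * X₂ ω j)‖
      = |v ω| * |c₁ * X₁ ω i * X₁ ω j + c₂ * X₂ ω i * X₂ ω j| := by
        rw [Real.norm_eq_abs, abs_mul]
    _ ≤ C * (|c₁| * ‖X₁ ω‖^2 + |c₂| * ‖X₂ ω‖^2) := by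
        apply mul_le_mul hω ?_ (abs_nonneg _) hC0
        calc |c₁ * X₁ ω i * X₁ ω j + c₂ * X₂ ω i * X₂ ω j|
            ≤ |c₁ * X₁ ω i * X₁ ω j| + |c₂ * X₂ ω i * X₂ ω j| := abs_add_le _ _
          _ = |c₁| * (|X₁ ω i| * |X₁ ω j|) + |c₂| * (|X₂ ω i| * |X₂ ω j|) := by
              rw [abs_mul, abs_mul, abs_mul, abs_mul, mul_assoc, mul_assoc]
          _ ≤ |c₁| * ‖X₁ ω‖^2 + |c₂| * ‖X₂ ω‖^2 :=
              add_le_add (mul_le_mul_of_nonneg_left hab (abs_nonneg _))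
                (mul_le_mul_of_nonneg_left hcd (abs_nonneg _))
    _ ≤ (C * (|c₁| + |c₂|)) * (‖X₁ ω‖^2 + ‖X₂ ω‖^2) := by
        nlinarith [sq_nonneg ‖X₁ ω‖, sq_nonneg ‖X₂ ω‖, abs_nonneg c₁, abs_nonneg c₂,
          mul_nonneg (mul_nonneg hC0 (abs_nonneg c₁)) (sq_nonneg ‖X₂ ω‖),
          mul_nonneg (mul_nonneg hC0 (abs_nonneg c₂)) (sq_nonneg ‖X₁ ω‖)]

/-- Laplace case of Section 3: the local QMELE is asymptotically at least as efficient
as the global self-weighted QMELE, i.e. `Σ₀⁻¹ Ω₀ Σ₀⁻¹ - 2Σ⁻¹` is positive semidefinite. -/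
theorem selfweighted_vs_local_qmele_laplace
    {Ω : Type*} [MeasurableSpace Ω] (P : Measure Ω) [IsProbabilityMeasure P]
    (m : ℕ) (X₁ X₂ : Ω → Fin m → ℝ) (hX₁ : Measurable X₁) (hX₂ : Measurable X₂)
    (hX₁2 : Integrable (fun ω => ‖X₁ ω‖ ^ 2) P)
    (hX₂2 : Integrable (fun ω => ‖X₂ ω‖ ^ 2) P)
    (w : Ω → ℝ) (hw : Measurable w) (K : ℝ)
    (hw0 : ∀ᵐ ω ∂P, 0 ≤ w ω) (hwK : ∀ᵐ ω ∂P, w ω ≤ K)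
    (S0 O0 S : Matrix (Fin m) (Fin m) ℝ)
    (hS0 : S0 = Matrix.of fun i j =>
        ∫ ω, w ω * ((1/2) * X₁ ω i * X₁ ω j + (1/8) * X₂ ω i * X₂ ω j) ∂P)
    (hO0 : O0 = Matrix.of fun i j =>
        ∫ ω, (w ω) ^ 2 * (X₁ ω i * X₁ ω j + (1/4) * X₂ ω i * X₂ ω j) ∂P)
    (hS : S = Matrix.of fun i j =>
        ∫ ω, ((1/2) * X₁ ω i * X₁ ω j + (1/8) * X₂ ω i * X₂ ω j) ∂P)
    (hO0pd : O0.PosDef) (hSpd : S.PosDef) (hS0inv : IsUnit S0.det) :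
    (S0⁻¹ * O0 * S0⁻¹ - (2 : ℝ) • S⁻¹).PosSemidef := by
  -- a.e. bounds
  have hwabs : ∀ᵐ ω ∂P, |w ω| ≤ K := by
    filter_upwards [hw0, hwK] with ω h0 hK
    rwa [abs_of_nonneg h0]
  have hw2abs : ∀ᵐ ω ∂P, |w ω ^ 2| ≤ K ^ 2 := by
    filter_upwards [hw0, hwK] with ω h0 hK
    rw [abs_of_nonneg (sq_nonneg _)]
    exact pow_le_pow_left₀ h0 hK 2
  -- entrywise integrability
  have hIS0 : ∀ i j, Integrable (fun ω =>
      w ω * ((1/2) * X₁ ω i * X₁ ω j + (1/8) * X₂ ω i * X₂ ω j)) P :=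
    fun i j => prod_int P X₁ X₂ hX₁ hX₂ hX₁2 hX₂2 w hw K hwabs (1/2) (1/8) i j
  have hIO0 : ∀ i j, Integrable (fun ω =>
      (w ω) ^ 2 * (X₁ ω i * X₁ ω j + (1/4) * X₂ ω i * X₂ ω j)) P := fun i j =>
    (prod_int P X₁ X₂ hX₁ hX₂ hX₁2 hX₂2 (fun ω => w ω ^ 2) (hw.pow_const 2) (K^2)
      hw2abs 1 (1/4) i j).congr (Filter.Eventually.of_forall fun ω => by ring)
  have hIS : ∀ i j, Integrable (fun ω =>
      ((1/2) * X₁ ω i * X₁ ω j + (1/8) * X₂ ω i * X₂ ω j)) P := fun i j =>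
    (prod_int P X₁ X₂ hX₁ hX₂ hX₁2 hX₂2 (fun _ => (1:ℝ)) measurable_const 1
      (Filter.Eventually.of_forall fun ω => by norm_num) (1/2) (1/8) i j).congr
      (Filter.Eventually.of_forall fun ω => by ring)
  -- quadratic form representations
  have IS0 : ∀ a c : Fin m → ℝ, a ⬝ᵥ S0 *ᵥ c
      = ∫ ω, w ω * ((1/2) * ((∑ i, a i * X₁ ω i) * (∑ i, c i * X₁ ω i))
          + (1/8) * ((∑ i, a i * X₂ ω i) * (∑ i, c i * X₂ ω i))) ∂P := by
    intro a c
    rw [hS0]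
    exact (bilin_rep P X₁ X₂ w (1/2) (1/8) _ (fun i j ω => rfl) hIS0 a c).1
  have JS0 : ∀ a c : Fin m → ℝ, Integrable (fun ω =>
      w ω * ((1/2) * ((∑ i, a i * X₁ ω i) * (∑ i, c i * X₁ ω i))
          + (1/8) * ((∑ i, a i * X₂ ω i) * (∑ i, c i * X₂ ω i)))) P :=
    fun a c => (bilin_rep P X₁ X₂ w (1/2) (1/8) _ (fun i j ω => rfl) hIS0 a c).2
  have IO0 : ∀ a c : Fin m → ℝ, a ⬝ᵥ O0 *ᵥ c
      = ∫ ω, w ω ^ 2 * (1 * ((∑ i, a i * X₁ ω i) * (∑ i, c i * X₁ ω i))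
          + (1/4) * ((∑ i, a i * X₂ ω i) * (∑ i, c i * X₂ ω i))) ∂P := by
    intro a c
    rw [hO0]
    exact (bilin_rep P X₁ X₂ (fun ω => w ω ^ 2) 1 (1/4) _ (fun i j ω => by ring) hIO0 a c).1
  have JO0 : ∀ a c : Fin m → ℝ, Integrable (fun ω =>
      w ω ^ 2 * (1 * ((∑ i, a i * X₁ ω i) * (∑ i, c i * X₁ ω i))
          + (1/4) * ((∑ i, a i * X₂ ω i) * (∑ i, c i * X₂ ω i)))) P :=
    fun a c => (bilin_rep P X₁ X₂ (fun ω => w ω ^ 2) 1 (1/4) _ (fun i j ω => by ring) hIO0 a c).2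
  have IS' : ∀ a c : Fin m → ℝ, a ⬝ᵥ S *ᵥ c
      = ∫ ω, (1:ℝ) * ((1/2) * ((∑ i, a i * X₁ ω i) * (∑ i, c i * X₁ ω i))
          + (1/8) * ((∑ i, a i * X₂ ω i) * (∑ i, c i * X₂ ω i))) ∂P := by
    intro a c
    rw [hS]
    exact (bilin_rep P X₁ X₂ (fun _ => (1:ℝ)) (1/2) (1/8) _ (fun i j ω => by ring) hIS a c).1
  have JS' : ∀ a c : Fin m → ℝ, Integrable (fun ω =>
      (1:ℝ) * ((1/2) * ((∑ i, a i * X₁ ω i) * (∑ i, c i * X₁ ω i))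
          + (1/8) * ((∑ i, a i * X₂ ω i) * (∑ i, c i * X₂ ω i)))) P :=
    fun a c => (bilin_rep P X₁ X₂ (fun _ => (1:ℝ)) (1/2) (1/8) _ (fun i j ω => by ring) hIS a c).2
  -- symmetry facts
  have hS0H : S0ᴴ = S0 := by
    rw [conjTranspose_eq_transpose_of_trivial, hS0]
    ext i j
    simp only [transpose_apply, Matrix.of_apply]
    exact integral_congr_ae (Filter.Eventually.of_forall fun ω => by ring)
  have hSdet : IsUnit S.det := hSpd.det_pos.ne'.isUnit
  -- the core matrix C
  set C : Matrix (Fin m) (Fin m) ℝ := O0 - (2:ℝ) • (S0 * S⁻¹ * S0) with hCdef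
  have hCherm : C.IsHermitian := by
    have h2 : (S0 * S⁻¹ * S0)ᴴ = S0 * S⁻¹ * S0 := by
      rw [conjTranspose_mul, conjTranspose_mul, conjTranspose_nonsing_inv, hS0H, hSpd.1.eq,
        ← Matrix.mul_assoc]
    show Cᴴ = C
    rw [hCdef, conjTranspose_sub, conjTranspose_smul, h2, hO0pd.1.eq, star_trivial]
  have hCps : C.PosSemidef := by
    refine Matrix.PosSemidef.of_dotProduct_mulVec_nonneg hCherm fun x => ?_
    simp only [star_trivial]
    set b : Fin m → ℝ := S⁻¹ *ᵥ (S0 *ᵥ x) with hbdef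
    have hM : (S0 * S⁻¹ * S0) *ᵥ x = S0 *ᵥ b := by
      rw [hbdef, ← Matrix.mulVec_mulVec, ← Matrix.mulVec_mulVec]
    have hquad : x ⬝ᵥ C *ᵥ x = x ⬝ᵥ O0 *ᵥ x - 2 * (x ⬝ᵥ S0 *ᵥ b) := by
      rw [hCdef, Matrix.sub_mulVec, smul_mulVec, dotProduct_sub, dotProduct_smul, hM,
        smul_eq_mul]
    have hSb : S *ᵥ b = S0 *ᵥ x := by
      rw [hbdef, Matrix.mulVec_mulVec, Matrix.mul_nonsing_inv S hSdet, Matrix.one_mulVec]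
    have hIde : b ⬝ᵥ S *ᵥ b = x ⬝ᵥ S0 *ᵥ b := by
      rw [hSb, IS0 b x, IS0 x b]
      exact integral_congr_ae (Filter.Eventually.of_forall fun ω => by ring)
    have key : (0:ℝ) ≤ ∫ ω,
        ((1/2) * (w ω ^ 2 * (1 * ((∑ i, x i * X₁ ω i) * (∑ i, x i * X₁ ω i))
            + (1/4) * ((∑ i, x i * X₂ ω i) * (∑ i, x i * X₂ ω i))))
         - 2 * (w ω * ((1/2) * ((∑ i, x i * X₁ ω i) * (∑ i, b i * X₁ ω i))
            + (1/8) * ((∑ i, x i * X₂ ω i) * (∑ i, b i * X₂ ω i))))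
         + (1:ℝ) * ((1/2) * ((∑ i, b i * X₁ ω i) * (∑ i, b i * X₁ ω i))
            + (1/8) * ((∑ i, b i * X₂ ω i) * (∑ i, b i * X₂ ω i)))) ∂P := by
      apply integral_nonneg
      intro ω
      have h1 := sq_nonneg (w ω * (∑ i, x i * X₁ ω i) - (∑ i, b i * X₁ ω i))
      have h2 := sq_nonneg (w ω * (∑ i, x i * X₂ ω i) - (∑ i, b i * X₂ ω i))
      simp only [Pi.zero_apply]
      nlinarith [h1, h2]
    have hf1 : Integrable (fun ω =>
        (1/2) * (w ω ^ 2 * (1 * ((∑ i, x i * X₁ ω i) * (∑ i, x i * X₁ ω i))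
            + (1/4) * ((∑ i, x i * X₂ ω i) * (∑ i, x i * X₂ ω i))))) P :=
      (JO0 x x).const_mul _
    have hg1 : Integrable (fun ω =>
        2 * (w ω * ((1/2) * ((∑ i, x i * X₁ ω i) * (∑ i, b i * X₁ ω i))
            + (1/8) * ((∑ i, x i * X₂ ω i) * (∑ i, b i * X₂ ω i))))) P :=
      (JS0 x b).const_mul _
    have hfg : Integrable (fun ω =>
        (1/2) * (w ω ^ 2 * (1 * ((∑ i, x i * X₁ ω i) * (∑ i, x i * X₁ ω i))
            + (1/4) * ((∑ i, x i * X₂ ω i) * (∑ i, x i * X₂ ω i))))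
         - 2 * (w ω * ((1/2) * ((∑ i, x i * X₁ ω i) * (∑ i, b i * X₁ ω i))
            + (1/8) * ((∑ i, x i * X₂ ω i) * (∑ i, b i * X₂ ω i))))) P := hf1.sub hg1
    rw [integral_add hfg (JS' b b), integral_sub hf1 hg1,
      integral_const_mul, integral_const_mul, ← IO0 x x, ← IS0 x b, ← IS' b b, hIde] at key
    rw [hquad]
    linarith
  have hS0invH : (S0⁻¹)ᴴ = S0⁻¹ := by rw [conjTranspose_nonsing_inv, hS0H]
  have e1 : S0⁻¹ * (S0 * S⁻¹ * S0) * S0⁻¹ = S⁻¹ := by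
    calc S0⁻¹ * (S0 * S⁻¹ * S0) * S0⁻¹
        = (S0⁻¹ * S0) * S⁻¹ * (S0 * S0⁻¹) := by simp only [Matrix.mul_assoc]
      _ = S⁻¹ := by
          rw [Matrix.nonsing_inv_mul S0 hS0inv, Matrix.mul_nonsing_inv S0 hS0inv, Matrix.one_mul,
            Matrix.mul_one]
  have hfin : S0⁻¹ * O0 * S0⁻¹ - (2:ℝ) • S⁻¹ = S0⁻¹ * C * (S0⁻¹)ᴴ := by
    rw [hS0invH, hCdef, Matrix.mul_sub, Matrix.sub_mul, Matrix.mul_smul, Matrix.smul_mul, e1]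
  rw [hfin]
  exact hCps.mul_mul_conjTranspose_same S0⁻¹
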